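/- In the generic mirabolic Hecke algebra ℛ_n over ℂ(q), the Jucys–Murphy elements L_i = q^{1−i}·T_{i−1}⋯T_1·e·T_1⋯T_{i−1} (where e = q⁻¹(T_0 + 1)) pairwise commute: L_i·L_j = L_j·L_i for all 1 ≤ i, j ≤ n. -/
import Mathlib


noncomputable section

/-- The relations of Solomon's presentation of the mirabolic Hecke algebra `R_n(K,q)`,
on generators `T_0, T_1, …, T_{n-1}` (indexed by `Fin n`). -/
inductive SolomonRel (K : Type) [Field K] (q : K) (n : ℕ) :
    FreeAlgebra K (Fin n) → FreeAlgebra K (Fin n) → Prop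
  | quad0 (i : Fin n) (hi : i.val = 0) :
      SolomonRel K q n (FreeAlgebra.ι K i * FreeAlgebra.ι K i)
        ((q - 2) • FreeAlgebra.ι K i + (q - 1) • (1 : FreeAlgebra K (Fin n)))
  | quad (i : Fin n) (hi : 1 ≤ i.val) :
      SolomonRel K q n (FreeAlgebra.ι K i * FreeAlgebra.ι K i)
        ((q - 1) • FreeAlgebra.ι K i + q • (1 : FreeAlgebra K (Fin n)))
  | braid (i j : Fin n) (hi : 1 ≤ i.val) (hij : i.val + 1 = j.val) :
      SolomonRel K q n (FreeAlgebra.ι K i * FreeAlgebra.ι K j * FreeAlgebra.ι K i)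
        (FreeAlgebra.ι K j * FreeAlgebra.ι K i * FreeAlgebra.ι K j)
  | rel4 (i j : Fin n) (hi : i.val = 0) (hj : j.val = 1) :
      SolomonRel K q n
        (FreeAlgebra.ι K i * FreeAlgebra.ι K j * FreeAlgebra.ι K i * FreeAlgebra.ι K j)
        ((q - 1) • (FreeAlgebra.ι K j * FreeAlgebra.ι K i * FreeAlgebra.ι K j +
            FreeAlgebra.ι K j * FreeAlgebra.ι K i) -
          FreeAlgebra.ι K i * FreeAlgebra.ι K j * FreeAlgebra.ι K i)
  | rel5 (i j : Fin n) (hi : i.val = 0) (hj : j.val = 1) :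
      SolomonRel K q n
        (FreeAlgebra.ι K j * FreeAlgebra.ι K i * FreeAlgebra.ι K j * FreeAlgebra.ι K i)
        ((q - 1) • (FreeAlgebra.ι K j * FreeAlgebra.ι K i * FreeAlgebra.ι K j +
            FreeAlgebra.ι K i * FreeAlgebra.ι K j) -
          FreeAlgebra.ι K i * FreeAlgebra.ι K j * FreeAlgebra.ι K i)
  | comm (i j : Fin n) (hij : i.val + 2 ≤ j.val ∨ j.val + 2 ≤ i.val) :
      SolomonRel K q n (FreeAlgebra.ι K i * FreeAlgebra.ι K j)
        (FreeAlgebra.ι K j * FreeAlgebra.ι K i)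

/-- The mirabolic Hecke algebra `R_n(K,q)`, presented by Solomon's relations. -/
abbrev MirabolicHecke (K : Type) [Field K] (q : K) (n : ℕ) : Type :=
  RingQuot (SolomonRel K q n)

/-- The generator `T_i` of the mirabolic Hecke algebra. -/
def MirabolicHecke.T {K : Type} [Field K] {q : K} {n : ℕ} (i : Fin n) :
    MirabolicHecke K q n :=
  RingQuot.mkAlgHom K (SolomonRel K q n) (FreeAlgebra.ι K i)


section JM

local notation "K" => RatFunc ℂ
local notation "q" => (RatFunc.X : RatFunc ℂ)

variable (n : ℕ)

/-- The generic mirabolic Hecke algebra `ℛ_n` over `ℂ(q)`. -/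
abbrev GenMirabolic (n : ℕ) : Type := MirabolicHecke K q n

/-- The generator `T_j` of `ℛ_n`, indexed by a natural number (junk value `0` if `j ≥ n`). -/
def Tnat (j : ℕ) : GenMirabolic n :=
  if h : j < n then MirabolicHecke.T ⟨j, h⟩ else 0

/-- The idempotent `e = q⁻¹(T_0 + 1)` of `ℛ_n`. -/
def eElt : GenMirabolic n := q⁻¹ • (Tnat n 0 + 1)

/-- The Jucys–Murphy element `L_i = q^{1−i}·T_{i−1}⋯T_1·e·T_1⋯T_{i−1}` of `ℛ_n`
(for `1 ≤ i ≤ n`; in particular `L_1 = e`). -/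
def JM (i : ℕ) : GenMirabolic n :=
  (q ^ (1 - (i : ℤ))) •
    (((List.range (i - 1)).reverse.map fun k => Tnat n (k + 1)).prod * eElt n *
      ((List.range (i - 1)).map fun k => Tnat n (k + 1)).prod)

end JM

section Aux

local notation "K" => RatFunc ℂ
local notation "q" => (RatFunc.X : RatFunc ℂ)

variable (n : ℕ)

/-- Unscaled Jucys–Murphy product. -/
def Pe (i : ℕ) : GenMirabolic n :=
  ((List.range (i - 1)).reverse.map fun k => Tnat n (k + 1)).prod * eElt n *
    ((List.range (i - 1)).map fun k => Tnat n (k + 1)).prod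

lemma JM_eq_smul_Pe (i : ℕ) : JM n i = (q ^ (1 - (i : ℤ))) • Pe n i := rfl

lemma Pe_one : Pe n 1 = eElt n := by simp [Pe]

lemma Pe_succ (m : ℕ) (hm : 1 ≤ m) :
    Pe n (m + 1) = Tnat n m * Pe n m * Tnat n m := by
  obtain ⟨k, rfl⟩ : ∃ k, m = k + 1 := ⟨m - 1, by omega⟩
  simp only [Pe, Nat.add_sub_cancel,
    List.range_succ, List.map_append, List.prod_append, List.reverse_append,
    List.map_cons, List.map_nil, List.prod_cons, List.prod_nil, List.reverse_cons,
    List.reverse_nil, List.nil_append, List.singleton_append, mul_one]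
  simp only [mul_assoc]

lemma Tnat_eq_T (j : ℕ) (h : j < n) : Tnat n j = MirabolicHecke.T ⟨j, h⟩ := by
  simp [Tnat, h]

lemma rel_eq {x y : FreeAlgebra K (Fin n)} (h : SolomonRel K q n x y) :
    RingQuot.mkAlgHom K (SolomonRel K q n) x = RingQuot.mkAlgHom K (SolomonRel K q n) y :=
  RingQuot.mkAlgHom_rel K h

lemma T_quad0 (h : 0 < n) :
    Tnat n 0 * Tnat n 0 = (q - 2) • Tnat n 0 + (q - 1) • 1 := by
  have := rel_eq n (SolomonRel.quad0 ⟨0, h⟩ rfl)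
  simpa [Tnat_eq_T n 0 h, MirabolicHecke.T, map_mul, map_add, map_smul, map_one] using this

lemma T_quad (a : ℕ) (h1 : 1 ≤ a) (h : a < n) :
    Tnat n a * Tnat n a = (q - 1) • Tnat n a + q • 1 := by
  have := rel_eq n (SolomonRel.quad ⟨a, h⟩ h1)
  simpa [Tnat_eq_T n a h, MirabolicHecke.T, map_mul, map_add, map_smul, map_one] using this

lemma T_braid (a : ℕ) (h1 : 1 ≤ a) (h : a + 1 < n) :
    Tnat n a * Tnat n (a + 1) * Tnat n a = Tnat n (a + 1) * Tnat n a * Tnat n (a + 1) := by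
  have := rel_eq n (SolomonRel.braid ⟨a, by omega⟩ ⟨a + 1, h⟩ h1 rfl)
  simpa [Tnat_eq_T n a (by omega), Tnat_eq_T n (a + 1) h, MirabolicHecke.T,
    map_mul] using this

lemma T_rel4 (h : 1 < n) :
    Tnat n 0 * Tnat n 1 * Tnat n 0 * Tnat n 1 =
      (q - 1) • (Tnat n 1 * Tnat n 0 * Tnat n 1 + Tnat n 1 * Tnat n 0) -
        Tnat n 0 * Tnat n 1 * Tnat n 0 := by
  have := rel_eq n (SolomonRel.rel4 ⟨0, by omega⟩ ⟨1, h⟩ rfl rfl)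
  simpa [Tnat_eq_T n 0 (by omega), Tnat_eq_T n 1 h, MirabolicHecke.T,
    map_mul, map_add, map_sub, map_smul] using this

lemma T_rel5 (h : 1 < n) :
    Tnat n 1 * Tnat n 0 * Tnat n 1 * Tnat n 0 =
      (q - 1) • (Tnat n 1 * Tnat n 0 * Tnat n 1 + Tnat n 0 * Tnat n 1) -
        Tnat n 0 * Tnat n 1 * Tnat n 0 := by
  have := rel_eq n (SolomonRel.rel5 ⟨0, by omega⟩ ⟨1, h⟩ rfl rfl)
  simpa [Tnat_eq_T n 0 (by omega), Tnat_eq_T n 1 h, MirabolicHecke.T,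
    map_mul, map_add, map_sub, map_smul] using this

lemma T_comm (a b : ℕ) (h : a + 2 ≤ b) : Commute (Tnat n a) (Tnat n b) := by
  by_cases hb : b < n
  · have ha : a < n := by omega
    have := rel_eq n (SolomonRel.comm ⟨a, ha⟩ ⟨b, hb⟩ (Or.inl h))
    simpa [Commute, SemiconjBy, Tnat_eq_T n a ha, Tnat_eq_T n b hb, MirabolicHecke.T,
      map_mul] using this
  · have : Tnat n b = 0 := by simp [Tnat, hb]
    rw [this]
    exact Commute.zero_right _

lemma T_comm_Pe (k i : ℕ) (hi : 1 ≤ i) (hk : i + 1 ≤ k) :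
    Commute (Tnat n k) (Pe n i) := by
  have he : Commute (Tnat n k) (eElt n) := by
    have h0 : Commute (Tnat n k) (Tnat n 0) := (T_comm n 0 k (by omega)).symm
    exact (h0.add_right (Commute.one_right _)).smul_right _
  have hl : ∀ x ∈ (List.range (i - 1)).map fun m => Tnat n (m + 1),
      Commute (Tnat n k) x := by
    intro x hx
    simp only [List.mem_map, List.mem_range] at hx
    obtain ⟨m, hm, rfl⟩ := hx
    exact (T_comm n (m + 1) k (by omega)).symm
  have hl' : ∀ x ∈ (List.range (i - 1)).reverse.map fun m => Tnat n (m + 1),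
      Commute (Tnat n k) x := by
    intro x hx
    simp only [List.mem_map, List.mem_reverse, List.mem_range] at hx
    obtain ⟨m, hm, rfl⟩ := hx
    exact (T_comm n (m + 1) k (by omega)).symm
  exact ((Commute.list_prod_right _ _ hl').mul_right he).mul_right
    (Commute.list_prod_right _ _ hl)

lemma key_step {A : Type} [Monoid A] (t u l : A)
    (hb : u * t * u = t * u * t) (hc : t * l = l * t)
    (hIH : u * l * u * l = l * u * l * u) :
    t * (u * l * u) * t * (u * l * u) = u * l * u * t * (u * l * u) * t := by
  have hb1 : ∀ z, u * (t * (u * z)) = t * (u * (t * z)) := fun z => by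
    rw [← mul_assoc, ← mul_assoc, hb, mul_assoc, mul_assoc]
  have hc1 : ∀ z, t * (l * z) = l * (t * z) := fun z => by
    rw [← mul_assoc, hc, mul_assoc]
  have hc1' : ∀ z, l * (t * z) = t * (l * z) := fun z => (hc1 z).symm
  have hIH1 : ∀ z, u * (l * (u * (l * z))) = l * (u * (l * (u * z))) := fun z => by
    rw [← mul_assoc, ← mul_assoc, ← mul_assoc, hIH, mul_assoc, mul_assoc, mul_assoc]
  have hb1' : ∀ z, t * (u * (t * z)) = u * (t * (u * z)) := fun z => (hb1 z).symm
  have hb0 : t * (u * t) = u * (t * u) := by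
    rw [← mul_assoc, ← mul_assoc, hb]
  have L : t * (u * (l * (u * (t * (u * (l * u)))))) =
      u * (t * (l * (u * (l * (u * (t * u)))))) := by
    rw [hb1 (l * u), hc1 u, hc1' (u * (l * (t * u))), hb1' (l * (u * (l * (t * u)))),
      hIH1 (t * u)]
  have R : u * (l * (u * (t * (u * (l * (u * t)))))) =
      u * (t * (l * (u * (l * (u * (t * u)))))) := by
    rw [hb1 (l * (u * t)), hc1 (u * t), hc1' (u * (l * (t * (u * t)))), hb0]
  calc t * (u * l * u) * t * (u * l * u)
      = t * (u * (l * (u * (t * (u * (l * u)))))) := by simp only [mul_assoc]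
    _ = u * (t * (l * (u * (l * (u * (t * u)))))) := L
    _ = u * (l * (u * (t * (u * (l * (u * t)))))) := R.symm
    _ = u * l * u * t * (u * l * u) * t := by simp only [mul_assoc]

lemma key (i : ℕ) (h1 : 1 ≤ i) :
    i < n →
    Tnat n i * Pe n i * Tnat n i * Pe n i = Pe n i * Tnat n i * Pe n i * Tnat n i := by
  induction i, h1 using Nat.le_induction with
  | base =>
    intro h2
    rw [Pe_one]
    have main : Tnat n 1 * (Tnat n 0 + 1) * Tnat n 1 * (Tnat n 0 + 1) =
        (Tnat n 0 + 1) * Tnat n 1 * (Tnat n 0 + 1) * Tnat n 1 := by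
      have R1 := T_quad n 1 le_rfl h2
      have R4 := T_rel4 n h2
      have R5 := T_rel5 n h2
      simp only [mul_add, add_mul, mul_one, one_mul]
      rw [R5, R4, mul_assoc (Tnat n 0) (Tnat n 1) (Tnat n 1)]
      simp only [R1]
      simp only [smul_add, add_mul, mul_add, smul_mul_assoc, mul_smul_comm, one_mul, mul_one]
      abel
    simp only [eElt, smul_mul_assoc, mul_smul_comm]
    rw [main]
  | succ m hm ih =>
    intro h2
    rw [Pe_succ n m hm]
    exact key_step (Tnat n (m + 1)) (Tnat n m) (Pe n m)
      (T_braid n m hm h2)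
      (T_comm_Pe n (m + 1) m hm le_rfl)
      (ih (by omega))

lemma Pe_commute (i j : ℕ) (h1 : 1 ≤ i) (hij : i ≤ j) :
    j ≤ n → Commute (Pe n i) (Pe n j) := by
  induction j, hij using Nat.le_induction with
  | base => exact fun _ => Commute.refl _
  | succ m hm ih =>
    intro hmn
    rw [Pe_succ n m (le_trans h1 hm)]
    rcases eq_or_lt_of_le hm with h | h
    · subst h
      have hkey := key n i h1 (by omega)
      show Pe n i * (Tnat n i * Pe n i * Tnat n i) = Tnat n i * Pe n i * Tnat n i * Pe n i
      rw [← mul_assoc, ← mul_assoc]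
      exact hkey.symm
    · have hT : Commute (Pe n i) (Tnat n m) := (T_comm_Pe n m i h1 h).symm
      exact (hT.mul_right (ih (by omega))).mul_right hT

lemma JM_comm_of_le (i j : ℕ) (h1 : 1 ≤ i) (hij : i ≤ j) (hjn : j ≤ n) :
    JM n i * JM n j = JM n j * JM n i := by
  have h := Pe_commute n i j h1 hij hjn
  rw [JM_eq_smul_Pe, JM_eq_smul_Pe]
  simp only [smul_mul_assoc, mul_smul_comm, smul_smul]
  rw [h.eq, mul_comm (q ^ (1 - (i : ℤ))) (q ^ (1 - (j : ℤ)))]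

end Aux


section Stmt11

local notation "K" => RatFunc ℂ

/-- The Jucys–Murphy elements of the generic mirabolic Hecke algebra
`ℛ_n` pairwise commute. -/
theorem jucysMurphy_commute (n : ℕ) (i j : ℕ) (hi1 : 1 ≤ i) (hin : i ≤ n)
    (hj1 : 1 ≤ j) (hjn : j ≤ n) :
    JM n i * JM n j = JM n j * JM n i := by
  rcases le_total i j with h | h
  · exact JM_comm_of_le n i j hi1 h hjn
  · exact (JM_comm_of_le n j i hj1 h hin).symm

end Stmt11
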